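/- Let T be a binary tree of size n. For every k ≥ 0, the coefficient of x^k in the Tamari polynomial B_T equals the number of binary trees T' of size n with T' ≤ T in the Tamari order whose left border has exactly k nodes. -/

import Mathlib

open Polynomial

/-- A binary tree: either the empty tree or a pair of binary trees
(left and right subtrees) grafted on an internal node. -/
inductive BinTree : Type
  | leaf : BinTree
  | node : BinTree → BinTree → BinTree

namespace BinTree

/-- The size of a binary tree: its number of internal nodes. -/
def size : BinTree → ℕ
  | leaf => 0
  | node l r => l.size + r.size + 1

/-- One right rotation somewhere in the tree: `Rot T T'` means that `T'` is obtained
from `T` by replacing one subtree of the form `y(x(A,B),C)` by `x(A,y(B,C))`. -/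
inductive Rot : BinTree → BinTree → Prop
  | root (A B C : BinTree) : Rot (node (node A B) C) (node A (node B C))
  | left {L L' : BinTree} (R : BinTree) : Rot L L' → Rot (node L R) (node L' R)
  | right (L : BinTree) {R R' : BinTree} : Rot R R' → Rot (node L R) (node L R')

/-- The Tamari order: `TamariLE T T'` iff `T'` is obtained from `T` by a (possibly empty)
sequence of right rotations. -/
def TamariLE (T T' : BinTree) : Prop := Relation.ReflTransGen Rot T T'

/-- The Tamari polynomial `B_T ∈ ℤ[x]`: `B_∅ = 1` and for `T = x(L,R)`, `B_T` is the
unique polynomial with `(x-1)·B_T = x·B_L·(x·B_R - B_R(1))` (exact division by the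
monic polynomial `X - 1`, the right-hand side vanishing at `x = 1`). -/
noncomputable def tamPoly : BinTree → Polynomial ℤ
  | leaf => 1
  | node l r =>
      (X * tamPoly l * (X * tamPoly r - C ((tamPoly r).eval 1))) /ₘ (X - C 1)

/-- The mirror Tamari polynomial, obtained by exchanging the roles of the left and
right subtrees in the recursive definition of the Tamari polynomial. -/
noncomputable def tamPolyMirror : BinTree → Polynomial ℤ
  | leaf => 1
  | node l r =>
      (X * tamPolyMirror r * (X * tamPolyMirror l - C ((tamPolyMirror l).eval 1))) /ₘ (X - C 1)

/-- The number of nodes on the left border of a binary tree. -/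
def leftBorder : BinTree → ℕ
  | leaf => 0
  | node l _ => l.leftBorder + 1

/-- The number of nodes on the right border of a binary tree. -/
def rightBorder : BinTree → ℕ
  | leaf => 0
  | node _ r => r.rightBorder + 1

/-- `inSub T a b`: in the unique binary-search-tree labelling of `T` by `1,…,size T`
(all labels of the left subtree of a node are smaller than its label, all labels of its
right subtree are larger), the node labelled `a` belongs to the subtree rooted at the
node labelled `b` (in particular `inSub T a a` holds for every node label `a`). -/
def inSub : BinTree → ℕ → ℕ → Prop
  | leaf => fun _ _ => False
  | node l r => fun a b =>
      (b = l.size + 1 ∧ 1 ≤ a ∧ a ≤ l.size + r.size + 1) ∨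
      inSub l a b ∨
      (l.size + 1 < a ∧ l.size + 1 < b ∧ inSub r (a - (l.size + 1)) (b - (l.size + 1)))

/-- The binary search tree poset of `T`: `bstRel T a b` iff `a ≺_T b`, i.e. `a ≠ b` and
the node labelled `a` is in the subtree rooted at the node labelled `b`. -/
def bstRel (T : BinTree) (a b : ℕ) : Prop := a ≠ b ∧ inSub T a b

/-- The increasing forest `inc(T)`: `a ≺ b` iff `a < b` and `a ≺_T b`. -/
def incRel (T : BinTree) (a b : ℕ) : Prop := a < b ∧ bstRel T a b

/-- The decreasing forest `dec(T)`: `b ≺ a` iff `b > a` and `b ≺_T a`. -/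
def decRel (T : BinTree) (a b : ℕ) : Prop := b < a ∧ bstRel T a b

/-- The relations of the interval-poset `IP[T,T']`: exactly those of `dec(T)`
together with those of `inc(T')`. -/
def IPrel (T T' : BinTree) (a b : ℕ) : Prop := decRel T a b ∨ incRel T' a b

end BinTree

open BinTree

/-- `σ` is a linear extension of the strict relation `rel` on `{1,…,n}`: reading the word
`σ(1)…σ(n)` (the `i`-th letter being the label `(σ i : ℕ) + 1`), whenever `rel a b` holds
the letter `a` appears before the letter `b`. -/
def IsLinExt (n : ℕ) (rel : ℕ → ℕ → Prop) (σ : Equiv.Perm (Fin n)) : Prop :=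
  ∀ i j : Fin n, rel ((σ i : ℕ) + 1) ((σ j : ℕ) + 1) → i < j

/-- An interval-poset of size `n`: a (strict) poset on `{1,…,n}` such that
`a ≺ c` implies `b ≺ c` for all `a < b < c`, and `c ≺ a` implies `b ≺ a` for all
`a < b < c`. -/
def IsIntervalPoset (n : ℕ) (rel : ℕ → ℕ → Prop) : Prop :=
  (∀ a b, rel a b → 1 ≤ a ∧ a ≤ n ∧ 1 ≤ b ∧ b ≤ n) ∧
  (∀ a, ¬ rel a a) ∧
  (∀ a b c, rel a b → rel b c → rel a c) ∧
  (∀ a b c, a < b → b < c → rel a c → rel b c) ∧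
  (∀ a b c, a < b → b < c → rel c a → rel b a)

/-- `trees(P)` : the number of connected components of the forest formed by the decreasing
relations of `P`, i.e. the number of `k ∈ {1,…,n}` such that there is no `j < k`
with `k ≺_P j`. -/
noncomputable def treeStat (n : ℕ) (rel : ℕ → ℕ → Prop) : ℕ :=
  Set.ncard {k : ℕ | 1 ≤ k ∧ k ≤ n ∧ ∀ j, j < k → ¬ rel k j}

/-- The composition `𝔹(I1,I2)` of two interval-posets of sizes `k1` and `k2`:
the set of interval-posets `I` of size `k1+k2+1` such that
(i) the relations of `I` among `1,…,k1` are exactly those of `I1`,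
(ii) the relations of `I` among `k1+2,…,k1+k2+1` are exactly those of `I2` shifted
by `k1+1`, (iii) `i ≺_I k1+1` for all `i ≤ k1`, and (iv) there is no relation
`k1+1 ≺_I j` for `j > k1+1`. -/
def Comp (k1 k2 : ℕ) (I1 I2 : ℕ → ℕ → Prop) : Set (ℕ → ℕ → Prop) :=
  {I | IsIntervalPoset (k1 + k2 + 1) I ∧
    (∀ a b, 1 ≤ a → a ≤ k1 → 1 ≤ b → b ≤ k1 → (I a b ↔ I1 a b)) ∧
    (∀ a b, k1 + 2 ≤ a → a ≤ k1 + k2 + 1 → k1 + 2 ≤ b → b ≤ k1 + k2 + 1 →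
      (I a b ↔ I2 (a - (k1 + 1)) (b - (k1 + 1)))) ∧
    (∀ i, 1 ≤ i → i ≤ k1 → I i (k1 + 1)) ∧
    (∀ j, k1 + 1 < j → ¬ I (k1 + 1) j)}

/-- The co-inversions of a permutation `σ` of `{1,…,n}` (written as the word
`σ(1)…σ(n)`): pairs `(σ(i), σ(j))` with `i < j` and `σ(i) > σ(j)`. -/
def coinv (n : ℕ) (σ : Equiv.Perm (Fin n)) : Set (Fin n × Fin n) :=
  {p | ∃ i j : Fin n, i < j ∧ σ j < σ i ∧ p = (σ i, σ j)}

namespace BinTree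

deriving instance DecidableEq for BinTree

/-- Insert a new node on the left spine of `r` at depth `p`, with left child `l`. -/
def ins (l : BinTree) : BinTree → ℕ → BinTree
  | r, 0 => node l r
  | node a b, (p+1) => node (ins l a p) b
  | leaf, _+1 => node l leaf

lemma size_ins (l r : BinTree) (p : ℕ) : (ins l r p).size = l.size + r.size + 1 := by
  induction r generalizing p with
  | leaf => cases p <;> simp [ins, size]
  | node a b iha ihb =>
    cases p with
    | zero => simp [ins, size]
    | succ p => simp [ins, size, iha]; omega

lemma lb_ins (l : BinTree) : ∀ (r : BinTree) (p : ℕ), p ≤ r.leftBorder →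
    (ins l r p).leftBorder = l.leftBorder + 1 + p := by
  intro r
  induction r with
  | leaf =>
    intro p hp
    simp only [leftBorder, Nat.le_zero] at hp
    subst hp; simp [ins, leftBorder]
  | node a b iha =>
    intro p hp
    cases p with
    | zero => simp [ins, leftBorder]
    | succ p =>
      have : p ≤ a.leftBorder := by simp [leftBorder] at hp; omega
      simp [ins, leftBorder, iha p this]; omega

lemma size_rot {t t' : BinTree} (h : Rot t t') : t.size = t'.size := by
  induction h with
  | root A B C => simp [size]; omega
  | left R _ ih => simp [size, ih]
  | right L _ ih => simp [size, ih]

lemma size_tamariLE {t t' : BinTree} (h : TamariLE t t') : t.size = t'.size := by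
  induction h with
  | refl => rfl
  | tail _ h ih => exact ih.trans (size_rot h)

lemma tamariLE_node_left {l l' : BinTree} (r : BinTree) (h : TamariLE l l') :
    TamariLE (node l r) (node l' r) := by
  induction h with
  | refl => exact .refl
  | tail _ h ih => exact ih.tail (.left r h)

lemma tamariLE_node_right (l : BinTree) {r r' : BinTree} (h : TamariLE r r') :
    TamariLE (node l r) (node l r') := by
  induction h with
  | refl => exact .refl
  | tail _ h ih => exact ih.tail (.right l h)

lemma tamariLE_node {l l' r r' : BinTree} (hl : TamariLE l l') (hr : TamariLE r r') :
    TamariLE (node l r) (node l' r') :=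
  (tamariLE_node_left r hl).trans (tamariLE_node_right l' hr)

lemma ins_le (l : BinTree) : ∀ (r : BinTree) (p : ℕ), p ≤ r.leftBorder →
    TamariLE (ins l r p) (node l r) := by
  intro r
  induction r with
  | leaf =>
    intro p hp
    simp only [leftBorder, Nat.le_zero] at hp
    subst hp; exact .refl
  | node a b iha =>
    intro p hp
    cases p with
    | zero => exact .refl
    | succ p =>
      have hpa : p ≤ a.leftBorder := by simp [leftBorder] at hp; omega
      have h1 : TamariLE (ins l (node a b) (p+1)) (node (node l a) b) :=
        tamariLE_node_left b (iha p hpa)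
      exact h1.tail (Rot.root l a b)
lemma ins_zero (l r : BinTree) : ins l r 0 = node l r := by cases r <;> rfl

lemma ins_succ (l a b : BinTree) (p : ℕ) : ins l (node a b) (p+1) = node (ins l a p) b := rfl

lemma rot_ins : ∀ (p : ℕ) (l r T'' : BinTree), p ≤ r.leftBorder → Rot T'' (ins l r p) →
    ∃ l' r' p', T'' = ins l' r' p' ∧ TamariLE l' l ∧ TamariLE r' r ∧ p' ≤ r'.leftBorder := by
  intro p
  induction p with
  | zero =>
    intro l r T'' h0 h
    rw [ins_zero] at h
    cases h
    case root =>
      rename_i B C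
      exact ⟨l, node B C, 1, by simp [ins_succ, ins_zero], .refl, .refl, by simp [leftBorder]⟩
    case left =>
      rename_i L'' hL
      exact ⟨L'', r, 0, (ins_zero _ _).symm, .single hL, .refl, Nat.zero_le _⟩
    case right =>
      rename_i R'' hR
      exact ⟨l, R'', 0, (ins_zero _ _).symm, .refl, .single hR, Nat.zero_le _⟩
  | succ p ih =>
    intro l r T'' hp h
    obtain ⟨a, b, rfl⟩ : ∃ a b, r = node a b := by
      cases r with
      | leaf => simp [leftBorder] at hp
      | node a b => exact ⟨a, b, rfl⟩
    have hpa : p ≤ a.leftBorder := by simp [leftBorder] at hp; omega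
    rw [ins_succ] at h
    cases h
    case root =>
      rename_i B C
      refine ⟨l, node (node a B) C, p+2, by simp [ins_succ], .refl, .single (Rot.root a B C), ?_⟩
      simp [leftBorder]; omega
    case left =>
      rename_i L'' hL
      obtain ⟨l', a', p', rfl, hl, ha, hp'⟩ := ih l a _ hpa hL
      exact ⟨l', node a' b, p'+1, by simp [ins_succ], hl, tamariLE_node_left b ha,
        by simp [leftBorder]; omega⟩
    case right =>
      rename_i R'' hR
      exact ⟨l, node a R'', p+1, by simp [ins_succ], .refl, tamariLE_node_right a (.single hR),
        by simp [leftBorder]; omega⟩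

lemma decomp {L R T' : BinTree} (h : TamariLE T' (node L R)) :
    ∃ l r p, T' = ins l r p ∧ TamariLE l L ∧ TamariLE r R ∧ p ≤ r.leftBorder := by
  induction h using Relation.ReflTransGen.head_induction_on with
  | refl => exact ⟨L, R, 0, (ins_zero L R).symm, .refl, .refl, Nat.zero_le _⟩
  | head hrot _ ih =>
    obtain ⟨l, r, p, rfl, hl, hr, hp⟩ := ih
    obtain ⟨l', r', p', rfl, hl', hr', hp'⟩ := rot_ins p l r _ hp hrot
    exact ⟨l', r', p', rfl, hl'.trans hl, hr'.trans hr, hp'⟩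

lemma ins_inj : ∀ (p₁ : ℕ) (l₁ r₁ : BinTree) (p₂ : ℕ) (l₂ r₂ : BinTree),
    l₁.size = l₂.size → p₁ ≤ r₁.leftBorder → p₂ ≤ r₂.leftBorder →
    ins l₁ r₁ p₁ = ins l₂ r₂ p₂ → l₁ = l₂ ∧ r₁ = r₂ ∧ p₁ = p₂ := by
  intro p₁
  induction p₁ with
  | zero =>
    intro l₁ r₁ p₂ l₂ r₂ hs _ hp₂ h
    cases p₂ with
    | zero =>
      rw [ins_zero, ins_zero] at h
      injection h with h1 h2; exact ⟨h1, h2, rfl⟩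
    | succ p₂ =>
      obtain ⟨a, b, rfl⟩ : ∃ a b, r₂ = node a b := by
        cases r₂ with
        | leaf => simp [leftBorder] at hp₂
        | node a b => exact ⟨a, b, rfl⟩
      rw [ins_zero, ins_succ] at h
      injection h with h1 h2
      have := size_ins l₂ a p₂
      rw [h1, this] at hs; omega
  | succ p₁ ih =>
    intro l₁ r₁ p₂ l₂ r₂ hs hp₁ hp₂ h
    obtain ⟨a₁, b₁, rfl⟩ : ∃ a b, r₁ = node a b := by
      cases r₁ with
      | leaf => simp [leftBorder] at hp₁
      | node a b => exact ⟨a, b, rfl⟩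
    have hpa₁ : p₁ ≤ a₁.leftBorder := by simp [leftBorder] at hp₁; omega
    cases p₂ with
    | zero =>
      rw [ins_zero, ins_succ] at h
      injection h with h1 h2
      have := size_ins l₁ a₁ p₁
      rw [← h1, this] at hs; omega
    | succ p₂ =>
      obtain ⟨a₂, b₂, rfl⟩ : ∃ a b, r₂ = node a b := by
        cases r₂ with
        | leaf => simp [leftBorder] at hp₂
        | node a b => exact ⟨a, b, rfl⟩
      have hpa₂ : p₂ ≤ a₂.leftBorder := by simp [leftBorder] at hp₂; omega
      rw [ins_succ, ins_succ] at h
      injection h with h1 h2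
      obtain ⟨g1, g2, g3⟩ := ih l₁ a₁ p₂ l₂ a₂ hs hpa₁ hpa₂ h1
      exact ⟨g1, by rw [g2, h2], by rw [g3]⟩
/-- The finite set of all trees `≤ T` in the Tamari order (with the same size). -/
def tamBelow : BinTree → Finset BinTree
  | leaf => {leaf}
  | node L R =>
    ((tamBelow L ×ˢ tamBelow R ×ˢ Finset.range (R.size + 1)).filter
      (fun t => t.2.2 ≤ t.2.1.leftBorder)).image (fun t => ins t.1 t.2.1 t.2.2)

lemma size_mem_below : ∀ (T t : BinTree), t ∈ tamBelow T → t.size = T.size := by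
  intro T
  induction T with
  | leaf => intro t ht; simp [tamBelow] at ht; subst ht; rfl
  | node L R ihL ihR =>
    intro t ht
    simp only [tamBelow, Finset.mem_image, Finset.mem_filter, Finset.mem_product] at ht
    obtain ⟨⟨l, r, p⟩, ⟨⟨hl, hr, -⟩, -⟩, rfl⟩ := ht
    simp only [size_ins, size, ihL l hl, ihR r hr]

lemma size_eq_zero {t : BinTree} (h : t.size = 0) : t = leaf := by
  cases t with
  | leaf => rfl
  | node a b => simp [size] at h

lemma mem_below : ∀ (T t : BinTree), t ∈ tamBelow T ↔ TamariLE t T := by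
  intro T
  induction T with
  | leaf =>
    intro t
    simp only [tamBelow, Finset.mem_singleton]
    constructor
    · rintro rfl; exact .refl
    · intro h; exact size_eq_zero (size_tamariLE h)
  | node L R ihL ihR =>
    intro t
    simp only [tamBelow, Finset.mem_image, Finset.mem_filter, Finset.mem_product]
    constructor
    · rintro ⟨⟨l, r, p⟩, ⟨⟨hl, hr, -⟩, hp⟩, rfl⟩
      exact (ins_le l r p hp).trans (tamariLE_node ((ihL l).mp hl) ((ihR r).mp hr))
    · intro h
      obtain ⟨l, r, p, rfl, hl, hr, hp⟩ := decomp h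
      refine ⟨⟨l, r, p⟩, ⟨⟨(ihL l).mpr hl, (ihR r).mpr hr, ?_⟩, hp⟩, rfl⟩
      have h1 : r.size = R.size := size_tamariLE hr
      have h2 : r.leftBorder ≤ r.size := by
        clear * -
        induction r with
        | leaf => simp [leftBorder, size]
        | node a b ih => simp [leftBorder, size]; omega
      simp only [Finset.mem_range]; omega
lemma lb_le_size : ∀ t : BinTree, t.leftBorder ≤ t.size := by
  intro t
  induction t with
  | leaf => simp [leftBorder, size]
  | node a b ih => simp [leftBorder, size]; omega

lemma filter_range_le (N n : ℕ) (h : n ≤ N) :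
    (Finset.range (N+1)).filter (fun p => p ≤ n) = Finset.range (n+1) := by
  ext p; simp only [Finset.mem_filter, Finset.mem_range]; omega

lemma eval_one_sum (s : Finset BinTree) :
    (∑ t ∈ s, (X:ℤ[X]) ^ t.leftBorder).eval 1 = (s.card : ℤ) := by
  rw [Polynomial.eval_finset_sum]
  simp

lemma tamPoly_eq_sum : ∀ T : BinTree, tamPoly T = ∑ t ∈ tamBelow T, X ^ t.leftBorder := by
  intro T
  induction T with
  | leaf => simp [tamPoly, tamBelow, leftBorder]
  | node L R ihL ihR =>
    set s := tamBelow L with hs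
    set u := tamBelow R with hu
    set D := ((s ×ˢ u ×ˢ Finset.range (R.size + 1)).filter
      (fun t : BinTree × BinTree × ℕ => t.2.2 ≤ t.2.1.leftBorder)) with hD
    have himg : tamBelow (node L R) = D.image (fun t => ins t.1 t.2.1 t.2.2) := rfl
    have hsum1 : ∑ t ∈ tamBelow (node L R), (X:ℤ[X]) ^ t.leftBorder
        = ∑ d ∈ D, (X:ℤ[X]) ^ (d.1.leftBorder + 1 + d.2.2) := by
      rw [himg, Finset.sum_image]
      · apply Finset.sum_congr rfl
        intro d hd
        rw [hD, Finset.mem_filter] at hd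
        rw [lb_ins _ _ _ hd.2]
      · intro x hx y hy hxy
        rw [hD, Finset.mem_coe, Finset.mem_filter, Finset.mem_product, Finset.mem_product] at hx hy
        have hsx : x.1.size = L.size := size_mem_below L _ hx.1.1
        have hsy : y.1.size = L.size := size_mem_below L _ hy.1.1
        obtain ⟨h1, h2, h3⟩ := ins_inj x.2.2 x.1 x.2.1 y.2.2 y.1 y.2.1
          (hsx.trans hsy.symm) hx.2 hy.2 hxy
        exact Prod.ext h1 (Prod.ext h2 h3)
    have hsum2 : ∑ d ∈ D, (X:ℤ[X]) ^ (d.1.leftBorder + 1 + d.2.2)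
        = ∑ l ∈ s, ∑ r ∈ u, ∑ p ∈ Finset.range (r.leftBorder + 1),
            (X:ℤ[X]) ^ (l.leftBorder + 1 + p) := by
      rw [hD, Finset.sum_filter, Finset.sum_product]
      apply Finset.sum_congr rfl
      intro l _
      rw [Finset.sum_product]
      apply Finset.sum_congr rfl
      intro r hr
      rw [← Finset.sum_filter, filter_range_le _ _ ((lb_le_size r).trans_eq (size_mem_below R r hr))]
    have geom : ∀ m : ℕ, ((X:ℤ[X]) - C 1) * (∑ p ∈ Finset.range (m+1), (X:ℤ[X])^p)
        = X^(m+1) - 1 := by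
      intro m
      rw [mul_comm]
      simpa using geom_sum_mul (X:ℤ[X]) (m+1)
    have inner : ∀ a m : ℕ, ((X:ℤ[X]) - C 1) * ∑ p ∈ Finset.range (m+1), (X:ℤ[X])^(a+1+p)
        = X^(a+1) * (X^(m+1) - 1) := by
      intro a m
      have h1 : ∑ p ∈ Finset.range (m+1), (X:ℤ[X])^(a+1+p)
          = X^(a+1) * ∑ p ∈ Finset.range (m+1), (X:ℤ[X])^p := by
        rw [Finset.mul_sum]
        exact Finset.sum_congr rfl (fun p _ => pow_add X (a+1) p)
      rw [h1, ← mul_assoc, mul_comm ((X:ℤ[X]) - C 1), mul_assoc, geom]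
    have key : ((X:ℤ[X]) - C 1) * (∑ t ∈ tamBelow (node L R), (X:ℤ[X]) ^ t.leftBorder)
        = X * tamPoly L * (X * tamPoly R - C ((tamPoly R).eval 1)) := by
      rw [hsum1, hsum2, ihL, ihR, eval_one_sum]
      rw [Finset.mul_sum]
      have step1 : ∀ l ∈ s, ((X:ℤ[X]) - C 1) * ∑ r ∈ u, ∑ p ∈ Finset.range (r.leftBorder + 1),
          (X:ℤ[X]) ^ (l.leftBorder + 1 + p)
          = X^(l.leftBorder+1) * ∑ r ∈ u, ((X:ℤ[X])^(r.leftBorder+1) - 1) := by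
        intro l _
        rw [Finset.mul_sum, Finset.mul_sum]
        apply Finset.sum_congr rfl
        intro r _
        rw [inner]
      rw [Finset.sum_congr rfl step1]
      rw [← Finset.sum_mul]
      have e1 : ∑ l ∈ s, (X:ℤ[X])^(l.leftBorder+1) = X * ∑ l ∈ s, (X:ℤ[X])^l.leftBorder := by
        rw [Finset.mul_sum]
        exact Finset.sum_congr rfl (fun l _ => by rw [pow_succ, mul_comm])
      have e2 : ∑ r ∈ u, ((X:ℤ[X])^(r.leftBorder+1) - 1)
          = X * (∑ r ∈ u, (X:ℤ[X])^r.leftBorder) - C (u.card : ℤ) := by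
        rw [Finset.sum_sub_distrib, Finset.sum_const, Finset.mul_sum]
        congr 1
        · exact Finset.sum_congr rfl (fun r _ => by rw [pow_succ, mul_comm])
        · simp [map_natCast]
      rw [e1, e2]
    have hm : ((X:ℤ[X]) - C 1).Monic := monic_X_sub_C 1
    calc tamPoly (node L R)
        = (X * tamPoly L * (X * tamPoly R - C ((tamPoly R).eval 1))) /ₘ (X - C 1) := rfl
      _ = (((X:ℤ[X]) - C 1) * (∑ t ∈ tamBelow (node L R), (X:ℤ[X]) ^ t.leftBorder)) /ₘ (X - C 1) := by
          rw [key]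
      _ = ∑ t ∈ tamBelow (node L R), (X:ℤ[X]) ^ t.leftBorder :=
          mul_divByMonic_cancel_left _ hm
end BinTree


/-- For a binary tree `T` of size `n` and every `k ≥ 0`, the coefficient of
`x^k` in the Tamari polynomial `B_T` equals the number of binary trees `T'` of size `n`
with `T' ≤ T` in the Tamari order whose left border has exactly `k` nodes. -/
theorem tamPoly_coeff (T : BinTree) (k : ℕ) :
    (tamPoly T).coeff k =
      (Nat.card {T' : BinTree // T'.size = T.size ∧ TamariLE T' T ∧ T'.leftBorder = k} : ℤ) := by
  have hiff : ∀ T' : BinTree,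
      (T'.size = T.size ∧ TamariLE T' T ∧ T'.leftBorder = k)
      ↔ T' ∈ (tamBelow T).filter (fun t => t.leftBorder = k) := by
    intro T'
    rw [Finset.mem_filter, mem_below]
    constructor
    · rintro ⟨-, h2, h3⟩; exact ⟨h2, h3⟩
    · rintro ⟨h1, h2⟩; exact ⟨size_tamariLE h1, h1, h2⟩
  have hcard : Nat.card {T' : BinTree // T'.size = T.size ∧ TamariLE T' T ∧ T'.leftBorder = k}
      = ((tamBelow T).filter (fun t => t.leftBorder = k)).card := by
    rw [Nat.card_congr (Equiv.subtypeEquivRight hiff)]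
    exact Nat.card_eq_finsetCard _
  rw [hcard, tamPoly_eq_sum, Polynomial.finset_sum_coeff]
  simp_rw [Polynomial.coeff_X_pow]
  rw [Finset.sum_boole]
  norm_num
  congr 1
  apply Finset.filter_congr
  intro t _
  simp [eq_comm]
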